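/- If R is a commutative ring such that ZA(R) is a star graph, then R has at most two maximal ideals. -/

import Mathlib

theorem aux14 {R : Type*} [CommRing R] (c : R)
    (hstar : ∀ x y : R, x ≠ 0 → ¬ IsUnit x → y ≠ 0 → ¬ IsUnit y → x ≠ y →
      ({r : R | r * x = 0} ∩ {r : R | r * y = 0} = {0} ↔ (x = c ∨ y = c)))
    (I J : Ideal R) (hI : I ≠ ⊤) (hJ : J ≠ ⊤) (u : R)
    (huJ : u ∈ J) (huI : 1 - u ∈ I) : u = c ∨ 1 - u = c := by
  have hu0 : u ≠ 0 := by
    rintro rfl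
    exact hI (I.eq_top_iff_one.2 (by simpa using huI))
  have huu : ¬ IsUnit u := fun h => hJ (J.eq_top_of_isUnit_mem huJ h)
  have h1u0 : (1 : R) - u ≠ 0 := by
    intro h
    exact huu ((sub_eq_zero.mp h) ▸ isUnit_one)
  have h1uu : ¬ IsUnit ((1 : R) - u) := fun h => hI (I.eq_top_of_isUnit_mem huI h)
  have hne : u ≠ 1 - u := by
    intro h
    exact huu (IsUnit.of_mul_eq_one (a := u) 2 (by linear_combination h))
  have hset : {r : R | r * u = 0} ∩ {r : R | r * (1 - u) = 0} = {0} := by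
    ext r
    simp only [Set.mem_inter_iff, Set.mem_setOf_eq, Set.mem_singleton_iff]
    constructor
    · rintro ⟨ha, hb⟩
      linear_combination ha + hb
    · rintro rfl
      simp
  exact (hstar u (1 - u) hu0 huu h1u0 h1uu hne).mp hset

theorem stmt14 {R : Type*} [CommRing R] (c : R) (hc0 : c ≠ 0) (hcu : ¬ IsUnit c)
    (hstar : ∀ x y : R, x ≠ 0 → ¬ IsUnit x → y ≠ 0 → ¬ IsUnit y → x ≠ y →
      ({r : R | r * x = 0} ∩ {r : R | r * y = 0} = {0} ↔ (x = c ∨ y = c))) :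
    ∀ m₁ m₂ m₃ : Ideal R, m₁.IsMaximal → m₂.IsMaximal → m₃.IsMaximal →
      m₁ = m₂ ∨ m₁ = m₃ ∨ m₂ = m₃ := by
  intro m₁ m₂ m₃ h1 h2 h3
  by_contra h
  push_neg at h
  obtain ⟨h12, h13, h23⟩ := h
  have c12 : IsCoprime m₁ m₂ := Ideal.isCoprime_iff_sup_eq.mpr (h1.coprime_of_ne h2 h12)
  have c13 : IsCoprime m₁ m₃ := Ideal.isCoprime_iff_sup_eq.mpr (h1.coprime_of_ne h3 h13)
  have c23 : IsCoprime m₂ m₃ := Ideal.isCoprime_iff_sup_eq.mpr (h2.coprime_of_ne h3 h23)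
  have cop1 : IsCoprime m₁ (m₂ * m₃) := c12.mul_right c13
  have cop2 : IsCoprime m₂ (m₁ * m₃) := c12.symm.mul_right c23
  obtain ⟨a, haI, u, huJ, hau⟩ := Ideal.isCoprime_iff_exists.mp cop1
  obtain ⟨b, hbI, v, hvJ, hbv⟩ := Ideal.isCoprime_iff_exists.mp cop2
  have hu2 : u ∈ m₂ := Ideal.mul_le_inf huJ |>.1
  have hu3 : u ∈ m₃ := Ideal.mul_le_inf huJ |>.2
  have hv1 : v ∈ m₁ := Ideal.mul_le_inf hvJ |>.1
  have hv3 : v ∈ m₃ := Ideal.mul_le_inf hvJ |>.2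
  have hu1 : (1 : R) - u ∈ m₁ := by
    have : (1 : R) - u = a := by linear_combination -hau
    rw [this]; exact haI
  have hv2 : (1 : R) - v ∈ m₂ := by
    have : (1 : R) - v = b := by linear_combination -hbv
    rw [this]; exact hbI
  have hucase := aux14 c hstar m₁ m₂ h1.ne_top h2.ne_top u hu2 hu1
  have hvcase := aux14 c hstar m₂ m₁ h2.ne_top h1.ne_top v hv1 hv2
  rcases hucase with hu | hu <;> rcases hvcase with hv | hv
  · -- u = c, v = c : then u = v ∈ m₁ and 1 - u ∈ m₁
    have huv : u = v := hu.trans hv.symm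
    have : (1 : R) ∈ m₁ := by
      have := m₁.add_mem hu1 (huv ▸ hv1); simpa using this
    exact h1.ne_top (m₁.eq_top_iff_one.2 this)
  · -- u = c, 1 - v = c : u = 1 - v, u ∈ m₃, v ∈ m₃
    have huv : u = 1 - v := hu.trans hv.symm
    have : (1 : R) ∈ m₃ := by
      have := m₃.add_mem hu3 hv3
      rw [huv] at this; simpa using this
    exact h3.ne_top (m₃.eq_top_iff_one.2 this)
  · -- 1 - u = c, v = c : v = 1 - u, u ∈ m₃, v ∈ m₃
    have huv : v = 1 - u := hv.trans hu.symm
    have : (1 : R) ∈ m₃ := by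
      have := m₃.add_mem hv3 hu3
      rw [huv] at this; simpa using this
    exact h3.ne_top (m₃.eq_top_iff_one.2 this)
  · -- 1 - u = c, 1 - v = c : u = v
    have huv : u = v := by
      have := hu.trans hv.symm
      linear_combination -this
    exact h1.ne_top (m₁.eq_top_iff_one.2 (by
      have := m₁.add_mem hu1 (huv ▸ hv1); simpa using this))
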